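/- Suppose for each pair $0 \leq s \leq t$ there is a family of compactly supported Borel probability kernels $k_{s,t}(x; du)$ on $\mathbb{R}$ and analytic maps $H_{s,t}: \mathbb{C}^+ \to \mathbb{C}^+$ with $H_{r,t}$ mapping into the domain of $H_{s,r}$ and $H_{s,t} = H_{s,r} \circ H_{r,t}$ for $s \leq r \leq t$, such that $\int_{\mathbb{R}} \frac{k_{s,t}(x; du)}{z - u} = \frac{1}{H_{s,t}(z) - x}$ for all $z \in \mathbb{C}^+$, $x \in \mathbb{R}$. Then the kernels satisfy the Chapman–Kolmogorov equation: $k_{s,t}(x; dv) = \int_{\mathbb{R}} k_{s,r}(x; du)\, k_{r,t}(u; dv)$ for all $0 \leq s \leq r \leq t$. -/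

import Mathlib

open MeasureTheory Complex Filter Real
open scoped ProbabilityTheory Topology NNReal ENNReal BoundedContinuousFunction

noncomputable def P (b a u : ℝ) : ℝ := b / ((a - u)^2 + b^2)

lemma P_eq {b : ℝ} (hb : 0 < b) (a u : ℝ) :
    P b a u = b⁻¹ * (1 + (b⁻¹ * (a - u))^2)⁻¹ := by
  unfold P
  have h1 : ((a-u)^2 + b^2) ≠ 0 := by positivity
  field_simp
  ring

lemma P_pos {b : ℝ} (hb : 0 < b) (a u : ℝ) : 0 < P b a u := by
  unfold P; positivity

lemma P_cont {b : ℝ} (hb : 0 < b) : Continuous fun p : ℝ × ℝ => P b p.2 p.1 := by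
  unfold P
  apply continuous_const.div
  · continuity
  · intro p
    have : (0:ℝ) < (p.2 - p.1)^2 + b^2 := by positivity
    exact this.ne'

lemma P_integrable {b : ℝ} (hb : 0 < b) (u : ℝ) : Integrable (fun a => P b a u) := by
  have i1 : Integrable fun x : ℝ => (1 + (b⁻¹ * x)^2)⁻¹ :=
    integrable_inv_one_add_sq.comp_mul_left' (inv_ne_zero hb.ne')
  have i2 : Integrable fun x : ℝ => (1 + (b⁻¹ * (x - u))^2)⁻¹ := i1.comp_sub_right u
  have := i2.const_mul b⁻¹
  apply this.congr
  exact ae_of_all _ fun a => (P_eq hb a u).symm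

lemma P_integral {b : ℝ} (hb : 0 < b) (u : ℝ) : ∫ a, P b a u = π := by
  have e1 : ∀ a, P b a u = b⁻¹ * (1 + (b⁻¹ * (a - u))^2)⁻¹ := fun a => P_eq hb a u
  simp_rw [e1]
  rw [integral_const_mul]
  have e2 : ∫ x : ℝ, (1 + (b⁻¹ * (x - u))^2)⁻¹
      = ∫ x : ℝ, (1 + (b⁻¹ * x)^2)⁻¹ :=
    integral_sub_right_eq_self (fun x => (1 + (b⁻¹ * x)^2)⁻¹) u
  rw [e2, Measure.integral_comp_mul_left (fun x : ℝ => (1 + x^2)⁻¹) b⁻¹,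
    integral_univ_inv_one_add_sq]
  simp [abs_of_pos hb, smul_eq_mul]
  field_simp

lemma resolvent_cont {z : ℂ} (hz : 0 < z.im) : Continuous fun u : ℝ => (z - (u:ℂ))⁻¹ := by
  apply (continuous_const.sub Complex.continuous_ofReal).inv₀
  intro u h
  replace h : z = (u:ℂ) := sub_eq_zero.mp h
  have : z.im = 0 := by rw [h]; simp
  linarith

lemma resolvent_norm {z : ℂ} (hz : 0 < z.im) (u : ℝ) : ‖(z - (u:ℂ))⁻¹‖ ≤ (z.im)⁻¹ := by
  rw [norm_inv]
  apply inv_anti₀ hz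
  calc z.im = (z - (u:ℂ)).im := by simp
    _ ≤ |(z - (u:ℂ)).im| := le_abs_self _
    _ ≤ ‖z - (u:ℂ)‖ := by exact Complex.abs_im_le_norm _

lemma resolvent_integrable (μ : Measure ℝ) [IsFiniteMeasure μ] {z : ℂ} (hz : 0 < z.im) :
    Integrable (fun u : ℝ => (z - (u:ℂ))⁻¹) μ :=
  Integrable.mono' (integrable_const (z.im)⁻¹) (resolvent_cont hz).aestronglyMeasurable
    (ae_of_all _ (resolvent_norm hz))

lemma key_im (a u : ℝ) {b : ℝ} (hb : 0 < b) :
    ((↑a + ↑b * I - ↑u : ℂ)⁻¹).im = -(P b a u) := by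
  rw [Complex.inv_im]
  unfold P
  have h1 : (↑a + ↑b * I - ↑u : ℂ).im = b := by simp
  have h2 : (↑a + ↑b * I - ↑u : ℂ).re = a - u := by simp
  rw [Complex.normSq_apply, h1, h2]
  rw [neg_div, neg_eq_iff_eq_neg, neg_neg]
  congr 1
  ring

lemma poisson_integral_eq_neg_im (ρ : Measure ℝ) [IsFiniteMeasure ρ] (a : ℝ) {b : ℝ}
    (hb : 0 < b) :
    ∫ u, P b a u ∂ρ = -(∫ u, ((↑a + ↑b * I : ℂ) - (u:ℂ))⁻¹ ∂ρ).im := by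
  have hz : (0:ℝ) < (↑a + ↑b * I : ℂ).im := by simp [hb]
  have hint := resolvent_integrable ρ hz
  have := Complex.imCLM.integral_comp_comm hint
  calc ∫ u, P b a u ∂ρ = ∫ u, -(((↑a + ↑b * I : ℂ) - (u:ℂ))⁻¹).im ∂ρ := by
        apply integral_congr_ae; apply ae_of_all; intro u
        show P b a u = -((↑a + ↑b * I - ↑u : ℂ)⁻¹).im
        rw [key_im a u hb, neg_neg]
    _ = -∫ u, Complex.imCLM (((↑a + ↑b * I : ℂ) - (u:ℂ))⁻¹) ∂ρ := by
        rw [← integral_neg]; rfl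
    _ = -(∫ u, ((↑a + ↑b * I : ℂ) - (u:ℂ))⁻¹ ∂ρ).im := by rw [this]; rfl

lemma conv_eq (f : ℝ →ᵇ ℝ) {b : ℝ} (hb : 0 < b) (u : ℝ) :
    ∫ a, f a * P b a u = ∫ s, f (u + b * s) * (1 + s^2)⁻¹ := by
  have hP : ∀ s : ℝ, P b (b * s + u) u = b⁻¹ * (1 + s^2)⁻¹ := by
    intro s
    unfold P
    rw [add_sub_cancel_right]
    have h2 : (b*s)^2 + b^2 = b^2 * (1 + s^2) := by ring
    rw [h2]
    have h3 : (0:ℝ) < 1 + s^2 := by positivity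
    field_simp
  have e1 : ∫ a, f a * P b a u = ∫ x, f (x + u) * P b (x + u) u :=
    (integral_add_right_eq_self (fun a => f a * P b a u) u).symm
  have e2 : ∫ s, f (b * s + u) * P b (b * s + u) u
      = |b⁻¹| • ∫ x, f (x + u) * P b (x + u) u :=
    Measure.integral_comp_mul_left (fun x => f (x + u) * P b (x + u) u) b
  have e3 : ∫ s, f (b * s + u) * P b (b * s + u) u
      = b⁻¹ * ∫ s, f (u + b * s) * (1 + s^2)⁻¹ := by
    rw [← integral_const_mul]
    congr 1; funext s
    rw [hP s, add_comm u (b*s)]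
    ring
  have hb' : |b⁻¹| = b⁻¹ := abs_of_pos (by positivity)
  have key : (b⁻¹ : ℝ) * (∫ x, f (x + u) * P b (x + u) u)
      = b⁻¹ * ∫ s, f (u + b * s) * (1 + s^2)⁻¹ := by
    calc (b⁻¹:ℝ) * (∫ x, f (x + u) * P b (x + u) u)
        = |b⁻¹| • ∫ x, f (x + u) * P b (x + u) u := by rw [hb', smul_eq_mul]
      _ = ∫ s, f (b * s + u) * P b (b * s + u) u := e2.symm
      _ = b⁻¹ * ∫ s, f (u + b * s) * (1 + s^2)⁻¹ := e3
  have hbne : (b⁻¹:ℝ) ≠ 0 := by positivity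
  rw [e1]
  exact mul_left_cancel₀ hbne key

lemma conv_tendsto (f : ℝ →ᵇ ℝ) (u : ℝ) :
    Tendsto (fun n : ℕ => ∫ a, f a * P (((n:ℝ)+1)⁻¹) a u) atTop (𝓝 (f u * π)) := by
  have hbpos : ∀ n : ℕ, (0:ℝ) < ((n:ℝ)+1)⁻¹ := fun n => by positivity
  have hrw : ∀ n : ℕ, ∫ a, f a * P (((n:ℝ)+1)⁻¹) a u
      = ∫ s, f (u + ((n:ℝ)+1)⁻¹ * s) * (1 + s^2)⁻¹ := fun n => conv_eq f (hbpos n) u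
  have hval : ∫ s : ℝ, f u * (1 + s^2)⁻¹ = f u * π := by
    rw [integral_const_mul, integral_univ_inv_one_add_sq]
  have key : Tendsto (fun n : ℕ => ∫ s, f (u + ((n:ℝ)+1)⁻¹ * s) * (1 + s^2)⁻¹) atTop
      (𝓝 (∫ s : ℝ, f u * (1 + s^2)⁻¹)) := by
    apply tendsto_integral_of_dominated_convergence (fun s => ‖f‖ * (1+s^2)⁻¹)
    · intro n
      have hc : Continuous fun s : ℝ => (1 + s^2)⁻¹ := by
        apply Continuous.inv₀ (by continuity)
        intro s; positivity
      exact (((f.continuous.comp (by continuity)).mul hc)).aestronglyMeasurable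
    · exact integrable_inv_one_add_sq.const_mul _
    · intro n
      apply ae_of_all
      intro s
      rw [norm_mul]
      have h1 : ‖(1 + s^2)⁻¹‖ = (1+s^2)⁻¹ := by
        rw [Real.norm_eq_abs, abs_of_pos (by positivity)]
      rw [h1]
      exact mul_le_mul_of_nonneg_right (f.norm_coe_le_norm _) (by positivity)
    · apply ae_of_all
      intro s
      apply Tendsto.mul_const
      have h0 : Tendsto (fun n : ℕ => u + ((n:ℝ)+1)⁻¹ * s) atTop (𝓝 u) := by
        have h1 : Tendsto (fun n : ℕ => ((n:ℝ)+1)⁻¹) atTop (𝓝 0) := by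
          have := tendsto_one_div_add_atTop_nhds_zero_nat (𝕜 := ℝ)
          simpa [one_div] using this
        have := (h1.mul_const s).const_add u
        simpa using this
      exact (f.continuous.tendsto u).comp h0
  rw [← hval]
  exact key.congr (fun n => (hrw n).symm)

lemma integral_bind_bdd (μ : Measure ℝ) [IsFiniteMeasure μ] (m : ℝ → Measure ℝ)
    (hm : Measurable m) (hp : ∀ u, IsProbabilityMeasure (m u)) (f : ℝ → ℂ)
    (hf : Continuous f) (C : ℝ) (hC : ∀ v, ‖f v‖ ≤ C) :
    ∫ v, f v ∂(μ.bind m) = ∫ u, ∫ v, f v ∂(m u) ∂μ := by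
  let κ : ProbabilityTheory.Kernel ℝ ℝ := ⟨m, hm⟩
  haveI : ProbabilityTheory.IsMarkovKernel κ := ⟨hp⟩
  have hbind : μ.bind m = (μ ⊗ₘ κ).map Prod.snd := by
    ext s hs
    rw [Measure.map_apply measurable_snd hs, Measure.bind_apply hs hm.aemeasurable,
      Measure.compProd_apply (measurable_snd hs)]
    rfl
  have hint : Integrable (fun p : ℝ × ℝ => f p.2) (μ ⊗ₘ κ) :=
    Integrable.mono' (integrable_const C) ((hf.comp continuous_snd).aestronglyMeasurable)
      (ae_of_all _ fun p => hC p.2)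
  rw [hbind, integral_map measurable_snd.aemeasurable hf.aestronglyMeasurable,
    Measure.integral_compProd hint]
  rfl

lemma fubini_swap (ρ : Measure ℝ) [IsFiniteMeasure ρ] (f : ℝ →ᵇ ℝ) {b : ℝ} (hb : 0 < b) :
    ∫ u, (∫ a, f a * P b a u) ∂ρ = ∫ a, f a * (∫ u, P b a u ∂ρ) := by
  have h1f : AEStronglyMeasurable (fun p : ℝ × ℝ => f p.2 * P b p.2 p.1) (ρ.prod volume) :=
    ((f.continuous.comp continuous_snd).mul (P_cont hb)).aestronglyMeasurable
  have hi : ∀ u : ℝ, Integrable (fun a => f a * P b a u) := fun u =>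
    (P_integrable hb u).bdd_mul f.continuous.aestronglyMeasurable
      (ae_of_all _ fun a => f.norm_coe_le_norm a)
  have h2 : ∀ u : ℝ, (fun a => ‖f a * P b a u‖) ≤ fun a => ‖f‖ * P b a u := by
    intro u a
    show ‖f a * P b a u‖ ≤ ‖f‖ * P b a u
    rw [norm_mul, Real.norm_eq_abs (P b a u), abs_of_pos (P_pos hb a u)]
    exact mul_le_mul_of_nonneg_right (f.norm_coe_le_norm a) (P_pos hb a u).le
  have hInt : Integrable (Function.uncurry fun u a => f a * P b a u) (ρ.prod volume) := by
    have : Function.uncurry (fun u a => f a * P b a u)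
        = fun p : ℝ × ℝ => f p.2 * P b p.2 p.1 := rfl
    rw [this, integrable_prod_iff h1f]
    constructor
    · exact ae_of_all _ fun u => hi u
    · apply Integrable.mono' (integrable_const (‖f‖ * π)) (h1f.norm.integral_prod_right')
      apply ae_of_all
      intro u
      calc ‖∫ a, ‖f a * P b a u‖‖ = ∫ a, ‖f a * P b a u‖ := by
            rw [Real.norm_eq_abs, _root_.abs_of_nonneg (integral_nonneg (fun a => norm_nonneg _))]
        _ ≤ ∫ a, ‖f‖ * P b a u :=
            integral_mono (hi u).norm ((P_integrable hb u).const_mul _) (h2 u)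
        _ = ‖f‖ * π := by rw [integral_const_mul, P_integral hb u]
  rw [integral_integral_swap hInt]
  congr 1; funext a
  rw [integral_const_mul]

lemma conv_bound (f : ℝ →ᵇ ℝ) {b : ℝ} (hb : 0 < b) (u : ℝ) :
    ‖∫ a, f a * P b a u‖ ≤ ‖f‖ * π := by
  have h2 : ∀ a : ℝ, ‖f a * P b a u‖ ≤ ‖f‖ * P b a u := by
    intro a
    rw [norm_mul, Real.norm_eq_abs (P b a u), abs_of_pos (P_pos hb a u)]
    exact mul_le_mul_of_nonneg_right (f.norm_coe_le_norm a) (P_pos hb a u).le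
  calc ‖∫ a, f a * P b a u‖ ≤ ∫ a, ‖f‖ * P b a u :=
        norm_integral_le_of_norm_le ((P_integrable hb u).const_mul _) (ae_of_all _ h2)
    _ = ‖f‖ * π := by rw [integral_const_mul, P_integral hb u]

lemma conv_aesm (ρ : Measure ℝ) [IsFiniteMeasure ρ] (f : ℝ →ᵇ ℝ) {b : ℝ} (hb : 0 < b) :
    AEStronglyMeasurable (fun u => ∫ a, f a * P b a u) ρ := by
  have h1f : AEStronglyMeasurable (fun p : ℝ × ℝ => f p.2 * P b p.2 p.1) (ρ.prod volume) :=
    ((f.continuous.comp continuous_snd).mul (P_cont hb)).aestronglyMeasurable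
  exact h1f.integral_prod_right'

lemma conv_integral_tendsto (ρ : Measure ℝ) [IsFiniteMeasure ρ] (f : ℝ →ᵇ ℝ) :
    Tendsto (fun n : ℕ => ∫ u, (∫ a, f a * P (((n:ℝ)+1)⁻¹) a u) ∂ρ) atTop
      (𝓝 (∫ u, f u * π ∂ρ)) := by
  apply tendsto_integral_of_dominated_convergence (fun _ => ‖f‖ * π)
  · intro n
    exact conv_aesm ρ f (by positivity)
  · exact integrable_const _
  · intro n
    exact ae_of_all _ fun u => conv_bound f (by positivity) u
  · exact ae_of_all _ fun u => conv_tendsto f u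

lemma measure_eq_of_cauchy (μ ν : Measure ℝ) [IsFiniteMeasure μ] [IsFiniteMeasure ν]
    (h : ∀ z : ℂ, 0 < z.im → ∫ u, (z - (u:ℂ))⁻¹ ∂μ = ∫ u, (z - (u:ℂ))⁻¹ ∂ν) : μ = ν := by
  have hP : ∀ (a : ℝ) (b : ℝ), 0 < b → ∫ u, P b a u ∂μ = ∫ u, P b a u ∂ν := by
    intro a b hb
    have hz : (0:ℝ) < ((a:ℂ) + (b:ℂ) * I).im := by simp [hb]
    rw [poisson_integral_eq_neg_im μ a hb, poisson_integral_eq_neg_im ν a hb, h _ hz]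
  have hbc : ∀ f : ℝ →ᵇ ℝ, ∫ u, f u ∂μ = ∫ u, f u ∂ν := by
    intro f
    have heq : (fun n : ℕ => ∫ u, (∫ a, f a * P (((n:ℝ)+1)⁻¹) a u) ∂μ)
        = fun n : ℕ => ∫ u, (∫ a, f a * P (((n:ℝ)+1)⁻¹) a u) ∂ν := by
      funext n
      have hb : (0:ℝ) < ((n:ℝ)+1)⁻¹ := by positivity
      rw [fubini_swap μ f hb, fubini_swap ν f hb]
      congr 1; funext a; rw [hP a _ hb]
    have h1 := conv_integral_tendsto μ f
    have h2 := conv_integral_tendsto ν f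
    rw [heq] at h1
    have h3 := tendsto_nhds_unique h1 h2
    rw [integral_mul_const, integral_mul_const] at h3
    exact mul_right_cancel₀ Real.pi_ne_zero h3
  apply ext_of_forall_lintegral_eq_of_IsFiniteMeasure
  intro f
  let g : ℝ →ᵇ ℝ :=
    { toFun := fun x => (f x : ℝ)
      continuous_toFun := NNReal.continuous_coe.comp f.continuous
      map_bounded' := by
        obtain ⟨C, hC⟩ := f.map_bounded'
        exact ⟨C, fun x y => by rw [Real.dist_eq, ← NNReal.dist_eq]; exact hC x y⟩ }
  have hg := hbc g
  rw [lintegral_coe_eq_integral f (g.integrable μ), lintegral_coe_eq_integral f (g.integrable ν)]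
  exact congrArg ENNReal.ofReal hg

/-- If the kernels `k_{s,t}(x; du)` are the representing measures of the resolvents
`1/(H_{s,t}(z) - x)` of a composing family of self-maps `H_{s,t}` of the upper half
plane, then they satisfy the Chapman–Kolmogorov equation. -/
theorem stmt19 (k : ℝ → ℝ → ℝ → Measure ℝ) (H : ℝ → ℝ → ℂ → ℂ)
    (hprob : ∀ s t : ℝ, 0 ≤ s → s ≤ t → ∀ x : ℝ, IsProbabilityMeasure (k s t x))
    (hsupp : ∀ s t : ℝ, 0 ≤ s → s ≤ t → ∀ x : ℝ, ∃ M : ℝ, k s t x (Set.Icc (-M) M)ᶜ = 0)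
    (hmeas : ∀ s t : ℝ, Measurable (k s t))
    (hmap : ∀ s t : ℝ, 0 ≤ s → s ≤ t → ∀ z : ℂ, 0 < z.im → 0 < (H s t z).im)
    (hcomp : ∀ s r t : ℝ, 0 ≤ s → s ≤ r → r ≤ t → ∀ z : ℂ, 0 < z.im →
      H s t z = H s r (H r t z))
    (hcauchy : ∀ s t : ℝ, 0 ≤ s → s ≤ t → ∀ x : ℝ, ∀ z : ℂ, 0 < z.im →
      ∫ u, (z - (u : ℂ))⁻¹ ∂(k s t x) = (H s t z - (x : ℂ))⁻¹) :
    ∀ s r t : ℝ, 0 ≤ s → s ≤ r → r ≤ t → ∀ x : ℝ,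
      k s t x = (k s r x).bind (k r t) := by
  intro s r t hs hsr hrt x
  have h0r : 0 ≤ r := hs.trans hsr
  have hst : s ≤ t := hsr.trans hrt
  haveI hμ : IsProbabilityMeasure (k s t x) := hprob s t hs hst x
  haveI hsr' : IsProbabilityMeasure (k s r x) := hprob s r hs hsr x
  haveI hνp : IsProbabilityMeasure ((k s r x).bind (k r t)) := by
    constructor
    rw [Measure.bind_apply MeasurableSet.univ (hmeas r t).aemeasurable]
    have h1 : ∀ u : ℝ, k r t u Set.univ = 1 := fun u => (hprob r t h0r hrt u).measure_univ
    simp only [h1, lintegral_one]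
    exact hsr'.measure_univ
  apply measure_eq_of_cauchy
  intro z hz
  rw [hcauchy s t hs hst x z hz,
    integral_bind_bdd (k s r x) (k r t) (hmeas r t) (fun u => hprob r t h0r hrt u)
      (fun v => (z - (v:ℂ))⁻¹) (resolvent_cont hz) (z.im)⁻¹ (resolvent_norm hz)]
  have e1 : ∀ u : ℝ, ∫ v, (z - (v:ℂ))⁻¹ ∂(k r t u) = ((H r t z : ℂ) - (u:ℂ))⁻¹ :=
    fun u => hcauchy r t h0r hrt u z hz
  calc (H s t z - (x : ℂ))⁻¹ = (H s r (H r t z) - (x : ℂ))⁻¹ := by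
        rw [hcomp s r t hs hsr hrt z hz]
    _ = ∫ u, ((H r t z : ℂ) - (u:ℂ))⁻¹ ∂(k s r x) :=
        (hcauchy s r hs hsr x (H r t z) (hmap r t h0r hrt z hz)).symm
    _ = ∫ u, ∫ v, (z - (v:ℂ))⁻¹ ∂(k r t u) ∂(k s r x) :=
        (integral_congr_ae (ae_of_all _ e1)).symm
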